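/- Every locally Boolean meet-semilattice of locally finite height is order-isomorphic to the face poset (including the empty face) of some abstract simplicial complex, ordered by inclusion. -/

import Mathlib

/-- An abstract simplicial complex on a vertex type `V`: a family of finite subsets of `V`
closed under taking subsets. -/
structure ASC (V : Type*) where
  faces : Set (Finset V)
  down_closed : ∀ ⦃σ τ : Finset V⦄, σ ∈ faces → τ ⊆ σ → τ ∈ faces

section Aux

variable {α : Type u} [SemilatticeInf α] [OrderBot α]

/-- The LUB of `{⊥, t}` is `t`. -/
lemma stmt8_lub_bot_pair {t s : α} (h : IsLUB {⊥, t} s) : s = t := by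
  refine le_antisymm (h.2 ?_) (h.1 (by simp))
  rintro v (rfl | rfl) <;> simp

/-- From distributivity: if `x ≤ u`, `u` is the LUB of `{b, b'}` and `x ⊓ b = ⊥`,
then `x ≤ b'`. -/
lemma stmt8_le_of_inf_bot
    (hdist : ∀ a b c j : α, IsLUB {b, c} j → IsLUB {a ⊓ b, a ⊓ c} (a ⊓ j))
    {x b b' u : α} (hx : x ≤ u) (hlub : IsLUB {b, b'} u) (hb : x ⊓ b = ⊥) : x ≤ b' := by
  have h := hdist x b b' u hlub
  rw [hb, inf_eq_left.mpr hx] at h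
  have hx' : x = x ⊓ b' := stmt8_lub_bot_pair h
  exact hx'.le.trans inf_le_right

/-- Binary joins bounded by a common upper bound exist. -/
lemma stmt8_join_pair
    (hdist : ∀ a b c j : α, IsLUB {b, c} j → IsLUB {a ⊓ b, a ⊓ c} (a ⊓ j))
    (hcompl : ∀ u y : α, y ≤ u → ∃ z : α, z ≤ u ∧ y ⊓ z = ⊥ ∧ IsLUB {y, z} u)
    {b c u : α} (hb : b ≤ u) (hc : c ≤ u) : ∃ j, j ≤ u ∧ IsLUB {b, c} j := by
  obtain ⟨b', hb'u, hbb', hlubb⟩ := hcompl u b hb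
  obtain ⟨c', hc'u, hcc', hlubc⟩ := hcompl u c hc
  have hd : b' ⊓ c' ≤ u := inf_le_left.trans hb'u
  obtain ⟨j, hju, hdj, hlubd⟩ := hcompl u (b' ⊓ c') hd
  have hbj : b ≤ j := by
    apply stmt8_le_of_inf_bot hdist hb hlubd
    apply le_bot_iff.mp
    calc b ⊓ (b' ⊓ c') ≤ b ⊓ b' := inf_le_inf_left b inf_le_left
    _ = ⊥ := hbb'
  have hcj : c ≤ j := by
    apply stmt8_le_of_inf_bot hdist hc hlubd
    apply le_bot_iff.mp
    calc c ⊓ (b' ⊓ c') ≤ c ⊓ c' := inf_le_inf_left c inf_le_right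
    _ = ⊥ := hcc'
  refine ⟨j, hju, ?_, ?_⟩
  · rintro v (rfl | rfl)
    · exact hbj
    · exact hcj
  · intro v hv
    have hbv : b ≤ v := hv (by simp)
    have hcv : c ≤ v := hv (by simp)
    set w := v ⊓ u with hw
    obtain ⟨d', hd'u, hwd', hlubw⟩ := hcompl u w inf_le_right
    have hd'b : d' ≤ b' := by
      apply stmt8_le_of_inf_bot hdist hd'u hlubb
      have : d' ⊓ b ≤ w ⊓ d' := by
        rw [inf_comm]
        exact inf_le_inf_right d' (le_inf hbv hb)
      exact le_bot_iff.mp (this.trans_eq hwd')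
    have hd'c : d' ≤ c' := by
      apply stmt8_le_of_inf_bot hdist hd'u hlubc
      have : d' ⊓ c ≤ w ⊓ d' := by
        rw [inf_comm]
        exact inf_le_inf_right d' (le_inf hcv hc)
      exact le_bot_iff.mp (this.trans_eq hwd')
    have hjw : j ≤ w := by
      rw [Set.pair_comm] at hlubw
      apply stmt8_le_of_inf_bot hdist hju hlubw
      have : j ⊓ d' ≤ (b' ⊓ c') ⊓ j := by
        rw [inf_comm]
        exact inf_le_inf_right j (le_inf hd'b hd'c)
      exact le_bot_iff.mp (this.trans_eq hdj)
    exact hjw.trans inf_le_left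

/-- An atom below a binary LUB is below one of the two elements. -/
lemma stmt8_atom_le_of_pair
    (hdist : ∀ a b c j : α, IsLUB {b, c} j → IsLUB {a ⊓ b, a ⊓ c} (a ⊓ j))
    {a b c j : α} (ha : IsAtom a) (hlub : IsLUB {b, c} j) (haj : a ≤ j) :
    a ≤ b ∨ a ≤ c := by
  have h := hdist a b c j hlub
  rw [inf_eq_left.mpr haj] at h
  rcases ha.le_iff.mp (inf_le_left : a ⊓ b ≤ a) with hab | hab
  · rcases ha.le_iff.mp (inf_le_left : a ⊓ c ≤ a) with hac | hac
    · exfalso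
      rw [hab, hac] at h
      have : a = (⊥ : α) := stmt8_lub_bot_pair h
      exact ha.1 this
    · exact Or.inr (inf_eq_left.mp hac)
  · exact Or.inl (inf_eq_left.mp hab)

/-- Finite joins bounded by a common upper bound exist. -/
lemma stmt8_join_finset
    (hdist : ∀ a b c j : α, IsLUB {b, c} j → IsLUB {a ⊓ b, a ⊓ c} (a ⊓ j))
    (hcompl : ∀ u y : α, y ≤ u → ∃ z : α, z ≤ u ∧ y ⊓ z = ⊥ ∧ IsLUB {y, z} u)
    (s : Finset α) :
    ∀ u : α, (∀ b ∈ s, b ≤ u) → ∃ j, j ≤ u ∧ IsLUB (↑s : Set α) j := by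
  classical
  induction s using Finset.induction_on with
  | empty => intro u _; exact ⟨⊥, bot_le, by simpa using isLUB_empty⟩
  | @insert b s hb ih =>
    intro u hu
    obtain ⟨j', hj'u, hlub'⟩ := ih u (fun c hc => hu c (Finset.mem_insert_of_mem hc))
    obtain ⟨j, hju, hlub⟩ := stmt8_join_pair hdist hcompl
      (hu b (Finset.mem_insert_self b s)) hj'u
    refine ⟨j, hju, ?_, ?_⟩
    · intro v hv
      rw [Finset.coe_insert] at hv
      rcases hv with rfl | hv
      · exact hlub.1 (by simp)
      · exact (hlub'.1 hv).trans (hlub.1 (by simp))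
    · intro v hv
      apply hlub.2
      rintro w (rfl | rfl)
      · exact hv (by simp)
      · apply hlub'.2
        intro c hc
        exact hv (by simp [hc])

/-- An atom below a join of atoms is one of them. -/
lemma stmt8_atom_mem_of_le_join
    (hdist : ∀ a b c j : α, IsLUB {b, c} j → IsLUB {a ⊓ b, a ⊓ c} (a ⊓ j))
    (hcompl : ∀ u y : α, y ≤ u → ∃ z : α, z ≤ u ∧ y ⊓ z = ⊥ ∧ IsLUB {y, z} u)
    (s : Finset α) :
    (∀ b ∈ s, IsAtom b) → ∀ j a : α, IsLUB (↑s : Set α) j → IsAtom a → a ≤ j → a ∈ s := by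
  classical
  induction s using Finset.induction_on with
  | empty =>
    intro _ j a hlub ha haj
    rw [Finset.coe_empty] at hlub
    have : j = ⊥ := hlub.unique isLUB_empty
    exact absurd (le_bot_iff.mp (this ▸ haj)) ha.1
  | @insert b s hbs ih =>
    intro hatoms j a hlub ha haj
    have hsub : ∀ c ∈ s, c ≤ j := fun c hc => hlub.1 (by simp [hc])
    obtain ⟨j', hj'j, hlub'⟩ := stmt8_join_finset hdist hcompl s j hsub
    have hpair : IsLUB {b, j'} j := by
      constructor
      · rintro v (rfl | rfl)
        · exact hlub.1 (by simp)
        · exact hj'j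
      · intro v hv
        apply hlub.2
        rw [Finset.coe_insert]
        rintro w (rfl | hw)
        · exact hv (by simp)
        · exact (hlub'.1 hw).trans (hv (by simp))
    rcases stmt8_atom_le_of_pair hdist ha hpair haj with h | h
    · have hb : IsAtom b := hatoms b (Finset.mem_insert_self b s)
      have : a = b := (hb.le_iff_eq ha.1).mp h
      simp [this]
    · exact Finset.mem_insert_of_mem
        (ih (fun c hc => hatoms c (Finset.mem_insert_of_mem hc)) j' a hlub' ha h)

/-- The cardinality of a finset of atoms is at most the height of its join. -/
lemma stmt8_card_le_height
    (hfin : ∀ x : α, Order.height x ≠ ⊤)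
    (hdist : ∀ a b c j : α, IsLUB {b, c} j → IsLUB {a ⊓ b, a ⊓ c} (a ⊓ j))
    (hcompl : ∀ u y : α, y ≤ u → ∃ z : α, z ≤ u ∧ y ⊓ z = ⊥ ∧ IsLUB {y, z} u)
    (s : Finset α) :
    (∀ b ∈ s, IsAtom b) → ∀ j : α, IsLUB (↑s : Set α) j → (s.card : ℕ∞) ≤ Order.height j := by
  classical
  induction s using Finset.induction_on with
  | empty => intro _ j _; simp
  | @insert b s hbs ih =>
    intro hatoms j hlub
    have hsub : ∀ c ∈ s, c ≤ j := fun c hc => hlub.1 (by simp [hc])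
    obtain ⟨j', hj'j, hlub'⟩ := stmt8_join_finset hdist hcompl s j hsub
    have hlt : j' < j := by
      rcases lt_or_eq_of_le hj'j with h | h
      · exact h
      · exfalso
        have hb : b ≤ j' := h ▸ hlub.1 (by simp)
        exact hbs (stmt8_atom_mem_of_le_join hdist hcompl s
          (fun c hc => hatoms c (Finset.mem_insert_of_mem hc)) j' b hlub'
          (hatoms b (Finset.mem_insert_self b s)) hb)
    have hih : (s.card : ℕ∞) ≤ Order.height j' :=
      ih (fun c hc => hatoms c (Finset.mem_insert_of_mem hc)) j' hlub'
    have hstep : Order.height j' + 1 ≤ Order.height j := by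
      rw [ENat.add_one_le_iff (hfin j')]
      exact Order.height_strictMono hlt (lt_top_iff_ne_top.mpr (hfin j'))
    calc ((insert b s).card : ℕ∞) = (s.card : ℕ∞) + 1 := by
          rw [Finset.card_insert_of_notMem hbs]; push_cast; ring
    _ ≤ Order.height j' + 1 := add_le_add_left hih 1
    _ ≤ Order.height j := hstep

/-- The set of atoms below any element is finite. -/
lemma stmt8_atoms_finite
    (hfin : ∀ x : α, Order.height x ≠ ⊤)
    (hdist : ∀ a b c j : α, IsLUB {b, c} j → IsLUB {a ⊓ b, a ⊓ c} (a ⊓ j))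
    (hcompl : ∀ u y : α, y ≤ u → ∃ z : α, z ≤ u ∧ y ⊓ z = ⊥ ∧ IsLUB {y, z} u)
    (x : α) : {a : α | IsAtom a ∧ a ≤ x}.Finite := by
  by_contra h
  have hinf : {a : α | IsAtom a ∧ a ≤ x}.Infinite := h
  obtain ⟨t, hts, htcard⟩ := hinf.exists_subset_card_eq ((Order.height x).toNat + 1)
  have hatoms : ∀ b ∈ t, IsAtom b := fun b hb => (hts hb).1
  have hle : ∀ b ∈ t, b ≤ x := fun b hb => (hts hb).2
  obtain ⟨j, hjx, hlub⟩ := stmt8_join_finset hdist hcompl t x hle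
  have h1 : (t.card : ℕ∞) ≤ Order.height j :=
    stmt8_card_le_height hfin hdist hcompl t hatoms j hlub
  have h2 : Order.height j ≤ Order.height x := Order.height_mono hjx
  have h3 : (Order.height x) = ((Order.height x).toNat : ℕ∞) :=
    (ENat.coe_toNat (hfin x)).symm
  rw [htcard] at h1
  have : (((Order.height x).toNat + 1 : ℕ) : ℕ∞) ≤ (((Order.height x).toNat : ℕ) : ℕ∞) :=
    h1.trans (h2.trans_eq h3)
  have := Nat.cast_le.mp this
  omega

/-- Every nonbot element has an atom below it. -/
lemma stmt8_exists_atom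
    (hfin : ∀ x : α, Order.height x ≠ ⊤) :
    ∀ x : α, x ≠ ⊥ → ∃ a : α, IsAtom a ∧ a ≤ x := by
  have key : ∀ n : ℕ, ∀ x : α, (Order.height x).toNat ≤ n → x ≠ ⊥ →
      ∃ a : α, IsAtom a ∧ a ≤ x := by
    intro n
    induction n with
    | zero =>
      intro x hx hne
      exfalso
      have : ⊥ < x := bot_lt_iff_ne_bot.mpr hne
      have h1 : Order.height (⊥ : α) < Order.height x :=
        Order.height_strictMono this (lt_top_iff_ne_top.mpr (hfin ⊥))
      have h2 : (0 : ℕ∞) < Order.height x := lt_of_le_of_lt bot_le h1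
      have : Order.height x = ((Order.height x).toNat : ℕ∞) := (ENat.coe_toNat (hfin x)).symm
      rw [this] at h2
      have hn0 : (Order.height x).toNat = 0 := Nat.le_zero.mp hx
      rw [hn0] at h2
      simp at h2
    | succ n ih =>
      intro x hx hne
      by_cases hax : IsAtom x
      · exact ⟨x, hax, le_rfl⟩
      · have : ∃ y : α, y < x ∧ y ≠ ⊥ := by
          by_contra hc
          push_neg at hc
          exact hax ⟨hne, fun b hb => hc b hb⟩
        obtain ⟨y, hyx, hyne⟩ := this
        have hlt : Order.height y < Order.height x :=
          Order.height_strictMono hyx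
            (lt_of_le_of_lt (Order.height_mono hyx.le) (lt_top_iff_ne_top.mpr (hfin x)))
        have hy : (Order.height y).toNat ≤ n := by
          have h1 : Order.height y = ((Order.height y).toNat : ℕ∞) :=
            (ENat.coe_toNat (hfin y)).symm
          have h2 : Order.height x = ((Order.height x).toNat : ℕ∞) :=
            (ENat.coe_toNat (hfin x)).symm
          rw [h1, h2] at hlt
          have := Nat.cast_lt.mp hlt
          omega
        obtain ⟨a, ha, hay⟩ := ih y hy hyne
        exact ⟨a, ha, hay.trans hyx.le⟩
  exact fun x => key (Order.height x).toNat x le_rfl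

/-- Every element is the LUB of the atoms below it. -/
lemma stmt8_lub_atoms
    (hfin : ∀ x : α, Order.height x ≠ ⊤)
    (hdist : ∀ a b c j : α, IsLUB {b, c} j → IsLUB {a ⊓ b, a ⊓ c} (a ⊓ j))
    (hcompl : ∀ u y : α, y ≤ u → ∃ z : α, z ≤ u ∧ y ⊓ z = ⊥ ∧ IsLUB {y, z} u) :
    ∀ x : α, IsLUB {a : α | IsAtom a ∧ a ≤ x} x := by
  have key : ∀ n : ℕ, ∀ x : α, (Order.height x).toNat ≤ n →
      IsLUB {a : α | IsAtom a ∧ a ≤ x} x := by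
    intro n
    induction n with
    | zero =>
      intro x hx
      have hxbot : x = ⊥ := by
        by_contra hne
        have : ⊥ < x := bot_lt_iff_ne_bot.mpr hne
        have h1 : Order.height (⊥ : α) < Order.height x :=
          Order.height_strictMono this (lt_top_iff_ne_top.mpr (hfin ⊥))
        have h2 : (0 : ℕ∞) < Order.height x := lt_of_le_of_lt bot_le h1
        have h3 : Order.height x = ((Order.height x).toNat : ℕ∞) := (ENat.coe_toNat (hfin x)).symm
        rw [h3, Nat.le_zero.mp hx] at h2
        simp at h2
      subst hxbot
      have : {a : α | IsAtom a ∧ a ≤ ⊥} = ∅ := by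
        ext a
        simp only [Set.mem_setOf_eq, Set.mem_empty_iff_false, iff_false, not_and]
        intro ha hle
        exact ha.1 (le_bot_iff.mp hle)
      rw [this]
      exact isLUB_empty
    | succ n ih =>
      intro x hx
      by_cases hxbot : x = ⊥
      · subst hxbot
        have : {a : α | IsAtom a ∧ a ≤ ⊥} = ∅ := by
          ext a
          simp only [Set.mem_setOf_eq, Set.mem_empty_iff_false, iff_false, not_and]
          intro ha hle
          exact ha.1 (le_bot_iff.mp hle)
        rw [this]
        exact isLUB_empty
      · obtain ⟨a, ha, hax⟩ := stmt8_exists_atom hfin x hxbot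
        obtain ⟨z, hzx, haz, hlub⟩ := hcompl x a hax
        have hzlt : z < x := by
          rcases lt_or_eq_of_le hzx with h | h
          · exact h
          · exfalso
            subst h
            rw [inf_eq_left.mpr hax] at haz
            exact ha.1 haz
        have hzn : (Order.height z).toNat ≤ n := by
          have hlt : Order.height z < Order.height x :=
            Order.height_strictMono hzlt (lt_top_iff_ne_top.mpr (hfin z))
          have h1 : Order.height z = ((Order.height z).toNat : ℕ∞) :=
            (ENat.coe_toNat (hfin z)).symm
          have h2 : Order.height x = ((Order.height x).toNat : ℕ∞) :=
            (ENat.coe_toNat (hfin x)).symm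
          rw [h1, h2] at hlt
          have := Nat.cast_lt.mp hlt
          omega
        have hz := ih z hzn
        constructor
        · rintro b ⟨_, hb⟩
          exact hb
        · intro v hv
          have hzv : z ≤ v := by
            apply hz.2
            rintro b ⟨hb, hbz⟩
            exact hv ⟨hb, hbz.trans hzx⟩
          have hav : a ≤ v := hv ⟨ha, hax⟩
          apply hlub.2
          rintro w (rfl | rfl)
          · exact hav
          · exact hzv
  exact fun x => key (Order.height x).toNat x le_rfl

end Aux

/-- Every locally Boolean meet-semilattice of locally finite height is
order-isomorphic to the face poset (including the empty face, ordered by inclusion) of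
some abstract simplicial complex. -/
theorem stmt8 {α : Type u} [SemilatticeInf α] [OrderBot α]
    (hfin : ∀ x : α, Order.height x ≠ ⊤)
    (hdist : ∀ a b c j : α, IsLUB {b, c} j → IsLUB {a ⊓ b, a ⊓ c} (a ⊓ j))
    (hcompl : ∀ u y : α, y ≤ u → ∃ z : α, z ≤ u ∧ y ⊓ z = ⊥ ∧ IsLUB {y, z} u) :
    ∃ (V : Type u) (K : ASC V), Nonempty (α ≃o {σ : Finset V // σ ∈ K.faces}) := by
  classical
  set V := {a : α // IsAtom a} with hV
  have hSfin : ∀ x : α, {a : V | (a : α) ≤ x}.Finite := by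
    intro x
    have heq : {a : V | (a : α) ≤ x} = Subtype.val ⁻¹' {b : α | IsAtom b ∧ b ≤ x} := by
      ext a
      exact ⟨fun h => ⟨a.2, h⟩, fun h => h.2⟩
    rw [heq]
    exact Set.Finite.preimage (Set.injOn_of_injective Subtype.val_injective)
      (stmt8_atoms_finite hfin hdist hcompl x)
  set f : α → Finset V := fun x => (hSfin x).toFinset with hf
  have mem_f : ∀ (a : V) (x : α), a ∈ f x ↔ (a : α) ≤ x := by
    intro a x
    simp [hf, Set.Finite.mem_toFinset]
  -- the image of `f` is downward closed
  have hdc : ∀ ⦃σ τ : Finset V⦄, σ ∈ Set.range f → τ ⊆ σ → τ ∈ Set.range f := by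
    rintro σ τ ⟨x, rfl⟩ hτ
    set t : Finset α := τ.image Subtype.val with ht
    have hatoms : ∀ b ∈ t, IsAtom b := by
      intro b hb
      obtain ⟨a, _, rfl⟩ := Finset.mem_image.mp hb
      exact a.2
    have hle : ∀ b ∈ t, b ≤ x := by
      intro b hb
      obtain ⟨a, ha, rfl⟩ := Finset.mem_image.mp hb
      exact (mem_f a x).mp (hτ ha)
    obtain ⟨j, hjx, hlub⟩ := stmt8_join_finset hdist hcompl t x hle
    refine ⟨j, ?_⟩
    ext a
    rw [mem_f a j]
    constructor
    · intro haj
      have := stmt8_atom_mem_of_le_join hdist hcompl t hatoms j (a : α) hlub a.2 haj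
      obtain ⟨a', ha', heq⟩ := Finset.mem_image.mp this
      rwa [Subtype.ext heq.symm]
    · intro ha
      have hmem : (a : α) ∈ (t : Set α) := by
        simp only [ht, Finset.coe_image, Set.mem_image, Finset.mem_coe]
        exact ⟨a, ha, rfl⟩
      exact hlub.1 hmem
  refine ⟨V, ⟨Set.range f, hdc⟩, ⟨?_⟩⟩
  -- key facts
  have hlubx : ∀ x : α, IsLUB {a : α | IsAtom a ∧ a ≤ x} x :=
    stmt8_lub_atoms hfin hdist hcompl
  have hinj : Function.Injective (fun x => (⟨f x, x, rfl⟩ : {σ : Finset V // σ ∈ Set.range f})) := by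
    intro x y hxy
    have hfe : f x = f y := congrArg Subtype.val hxy
    have hseq : {a : α | IsAtom a ∧ a ≤ x} = {a : α | IsAtom a ∧ a ≤ y} := by
      ext b
      simp only [Set.mem_setOf_eq]
      constructor
      · rintro ⟨hb, hbx⟩
        refine ⟨hb, ?_⟩
        have : (⟨b, hb⟩ : V) ∈ f x := (mem_f ⟨b, hb⟩ x).mpr hbx
        rw [hfe] at this
        exact (mem_f ⟨b, hb⟩ y).mp this
      · rintro ⟨hb, hby⟩
        refine ⟨hb, ?_⟩
        have : (⟨b, hb⟩ : V) ∈ f y := (mem_f ⟨b, hb⟩ y).mpr hby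
        rw [← hfe] at this
        exact (mem_f ⟨b, hb⟩ x).mp this
    exact (hlubx x).unique (hseq ▸ hlubx y)
  have hsurj : Function.Surjective
      (fun x => (⟨f x, x, rfl⟩ : {σ : Finset V // σ ∈ Set.range f})) := by
    rintro ⟨σ, x, rfl⟩
    exact ⟨x, rfl⟩
  refine ⟨Equiv.ofBijective _ ⟨hinj, hsurj⟩, ?_⟩
  intro x y
  show f x ≤ f y ↔ x ≤ y
  constructor
  · intro h
    apply (hlubx x).2
    rintro b ⟨hb, hbx⟩
    have : (⟨b, hb⟩ : V) ∈ f x := (mem_f ⟨b, hb⟩ x).mpr hbx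
    exact (mem_f ⟨b, hb⟩ y).mp (h this)
  · intro h a ha
    exact (mem_f a y).mpr (((mem_f a x).mp ha).trans h)
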